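/- Fix an n x n matrix X over F_q of rank i, and let c <= j <= n. The number of n x n matrices Y over F_q with rank(Y) = j and dim(col(X) ∩ col(Y)) = c equals q^{(i-c)(j-c)} (i choose c)_q (n-i choose j-c)_q times the product over l = 0 to j-1 of (q^n - q^l). -/

import Mathlib

open Matrix Function LinearMap Module Submodule Finset

section Aux
variable {K : Type*} [Field K] [Fintype K]

instance aux_finite_submodule {V : Type*} [AddCommGroup V] [Module K V] [Finite V] :
    Finite (Submodule K V) :=
  Finite.of_injective (fun W => (W : Set V)) SetLike.coe_injective

/-- Unconditional count of linearly independent tuples. -/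
lemma aux_card_li {V : Type*} [AddCommGroup V] [Module K V] [Finite V] (k : ℕ) :
    Nat.card {s : Fin k → V // LinearIndependent K s} =
      ∏ l ∈ Finset.range k, (Fintype.card K ^ Module.finrank K V - Fintype.card K ^ l) := by
  rcases le_or_gt k (Module.finrank K V) with hk | hk
  · rw [card_linearIndependent hk, ← Fin.prod_univ_eq_prod_range]
  · have : IsEmpty {s : Fin k → V // LinearIndependent K s} := by
      constructor
      rintro ⟨s, hs⟩
      have := hs.fintype_card_le_finrank
      simp only [Fintype.card_fin] at this
      omega
    rw [Nat.card_of_isEmpty]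
    refine (Finset.prod_eq_zero (Finset.mem_range.2 hk) ?_).symm
    simp

/-- Restrict tuples to a submodule. -/
def auxRestrictTupleEquiv {V : Type*} [AddCommGroup V] [Module K V] (W : Submodule K V)
    (k : ℕ) (p : (Fin k → V) → Prop) :
    {s : Fin k → V // (∀ l, s l ∈ W) ∧ p s} ≃ {s : Fin k → W // p (fun l => (s l : V))} where
  toFun s := ⟨fun l => ⟨s.1 l, s.2.1 l⟩, s.2.2⟩
  invFun s := ⟨fun l => (s.1 l : V), fun l => (s.1 l).2, s.2⟩
  left_inv s := rfl
  right_inv s := rfl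

lemma aux_card_li_sub {V : Type*} [AddCommGroup V] [Module K V] [Finite V]
    (W : Submodule K V) (k : ℕ) :
    Nat.card {s : Fin k → V // (∀ l, s l ∈ W) ∧ LinearIndependent K s} =
      ∏ l ∈ Finset.range k, (Fintype.card K ^ Module.finrank K W - Fintype.card K ^ l) := by
  rw [Nat.card_congr (auxRestrictTupleEquiv W k _), Nat.card_congr
    (Equiv.subtypeEquivRight (fun s => by
      exact W.subtype.linearIndependent_iff (ker_subtype W) (v := s)))]
  exact aux_card_li k

def auxFiberSigmaEquiv {α β : Type*} (f : α → β) (p : β → Prop) :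
    {a : α // p (f a)} ≃ Σ b : Subtype p, {a : α // f a = b.1} where
  toFun a := ⟨⟨f a.1, a.2⟩, ⟨a.1, rfl⟩⟩
  invFun x := ⟨x.2.1, by rw [x.2.2]; exact x.1.2⟩
  left_inv a := rfl
  right_inv := by
    rintro ⟨⟨b, hb⟩, ⟨a, h⟩⟩
    dsimp only at h
    subst h
    rfl

lemma aux_card_fiber_const {α β : Type*} [Finite α] [Finite β] (f : α → β) (p : β → Prop)
    (m : ℕ) (h : ∀ b, p b → Nat.card {a : α // f a = b} = m) :
    Nat.card {a : α // p (f a)} = m * Nat.card {b : β // p b} := by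
  classical
  have := Fintype.ofFinite α
  have := Fintype.ofFinite β
  rw [Nat.card_congr (auxFiberSigmaEquiv f p), Nat.card_eq_fintype_card, Fintype.card_sigma,
    Nat.card_eq_fintype_card]
  calc ∑ b : Subtype p, Fintype.card {a // f a = b.1}
      = ∑ _b : Subtype p, m := by
        refine Finset.sum_congr rfl fun b _ => ?_
        rw [← Nat.card_eq_fintype_card]; exact h b.1 b.2
    _ = m * Fintype.card (Subtype p) := by
        rw [Finset.sum_const, smul_eq_mul, Finset.card_univ, mul_comm]

lemma aux_card_tuple_comp {A B : Type*} [AddCommGroup A] [Module K A] [AddCommGroup B]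
    [Module K B] [Finite A] [Finite B] (f : A →ₗ[K] B) (hf : Surjective f) (t : ℕ)
    (p : (Fin t → B) → Prop) :
    Nat.card {w : Fin t → A // p (⇑f ∘ w)} =
      Nat.card (LinearMap.ker f) ^ t * Nat.card {z : Fin t → B // p z} := by
  refine aux_card_fiber_const (fun w => ⇑f ∘ w) p _ (fun z _ => ?_)
  have e : {w : Fin t → A // ⇑f ∘ w = z} ≃ ∀ l : Fin t, {a : A // f a = z l} :=
    (Equiv.subtypeEquivRight (fun w =>
      show ⇑f ∘ w = z ↔ ∀ l, f (w l) = z l from funext_iff)).trans (Equiv.subtypePiEquivPi (p := fun l a => f a = z l))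
  rw [Nat.card_congr e, Nat.card_pi]
  have hfib : ∀ l : Fin t, Nat.card {a : A // f a = z l} = Nat.card (LinearMap.ker f) := by
    intro l
    obtain ⟨a₀, ha₀⟩ := hf (z l)
    have e2 : (LinearMap.ker f) ≃ {a : A // f a = z l} :=
      { toFun := fun x => ⟨x.1 + a₀, by rw [map_add, ha₀, LinearMap.mem_ker.mp x.2, zero_add]⟩
        invFun := fun a => ⟨a.1 - a₀, by
          rw [LinearMap.mem_ker, map_sub, a.2, ha₀, sub_self]⟩
        left_inv := fun x => by ext; simp
        right_inv := fun a => by ext; simp }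
    exact (Nat.card_congr e2).symm
  simp only [hfib, Finset.prod_const, Finset.card_univ, Fintype.card_fin]

lemma aux_mulVecLin_surj_iff {d m : ℕ} (M : Matrix (Fin d) (Fin m) K) :
    Surjective M.mulVecLin ↔ LinearIndependent K (fun l => M l) := by
  change Surjective M.mulVecLin ↔ LinearIndependent K M.row
  rw [← Matrix.vecMul_injective_iff]
  have h1 : Surjective M.mulVecLin ↔ M.rank = d := by
    rw [← LinearMap.range_eq_top, Matrix.rank]
    constructor
    · intro h; rw [h, finrank_top, Module.finrank_fintype_fun_eq_card, Fintype.card_fin]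
    · intro h
      apply Submodule.eq_top_of_finrank_eq
      rw [h, Module.finrank_fintype_fun_eq_card, Fintype.card_fin]
  have h2 : Injective M.vecMul ↔ Mᵀ.rank = d := by
    have hmv : M.vecMul = ⇑Mᵀ.mulVecLin := by
      funext x; simp [Matrix.mulVecLin_transpose, Matrix.vecMul_transpose]
    rw [hmv, ← LinearMap.ker_eq_bot]
    have hrn := LinearMap.finrank_range_add_finrank_ker Mᵀ.mulVecLin
    rw [Module.finrank_fintype_fun_eq_card, Fintype.card_fin] at hrn
    rw [← Submodule.finrank_eq_zero]
    unfold Matrix.rank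
    omega
  rw [h1, h2, Matrix.rank_transpose]

lemma aux_card_surj {m j : ℕ} (W : Type*) [AddCommGroup W] [Module K W] [Finite W]
    (hW : Module.finrank K W = j) :
    Nat.card {h : (Fin m → K) →ₗ[K] W // Surjective h} =
      ∏ l ∈ Finset.range j, (Fintype.card K ^ m - Fintype.card K ^ l) := by
  have : Module.Finite K W := Module.Finite.of_finite
  obtain ⟨e⟩ : Nonempty (W ≃ₗ[K] (Fin j → K)) := by
    apply FiniteDimensional.nonempty_linearEquiv_of_finrank_eq
    rw [hW, Module.finrank_fintype_fun_eq_card, Fintype.card_fin]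
  have e1 : {h : (Fin m → K) →ₗ[K] W // Surjective h} ≃
      {h : (Fin m → K) →ₗ[K] (Fin j → K) // Surjective h} :=
    { toFun := fun h => ⟨e.toLinearMap ∘ₗ h.1, e.surjective.comp h.2⟩
      invFun := fun h => ⟨e.symm.toLinearMap ∘ₗ h.1, e.symm.surjective.comp h.2⟩
      left_inv := fun h => by ext x; simp
      right_inv := fun h => by ext x; simp }
  have e2 : {h : (Fin m → K) →ₗ[K] (Fin j → K) // Surjective h} ≃
      {M : Matrix (Fin j) (Fin m) K // Surjective M.mulVecLin} :=
    Equiv.subtypeEquiv (Matrix.toLin' (R := K) (m := Fin j) (n := Fin m)).symm.toEquiv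
      (fun h => by
        have hh : ((Matrix.toLin'.symm.toEquiv h : Matrix (Fin j) (Fin m) K)).mulVecLin = h := by
          rw [← Matrix.toLin'_apply']
          simp
        rw [hh])
  have e3 : {M : Matrix (Fin j) (Fin m) K // Surjective M.mulVecLin} ≃
      {s : Fin j → (Fin m → K) // LinearIndependent K s} :=
    (Equiv.subtypeEquivRight (fun M => aux_mulVecLin_surj_iff M)).trans
      (Equiv.subtypeEquiv (Matrix.of.symm) (fun M => Iff.rfl))
  rw [Nat.card_congr (e1.trans (e2.trans e3)), aux_card_li]
  rw [Module.finrank_fintype_fun_eq_card, Fintype.card_fin]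

lemma aux_card_colspace {m j : ℕ} (W : Submodule K (Fin m → K))
    (hW : Module.finrank K W = j) :
    Nat.card {Y : Matrix (Fin m) (Fin m) K // LinearMap.range Y.mulVecLin = W} =
      ∏ l ∈ Finset.range j, (Fintype.card K ^ m - Fintype.card K ^ l) := by
  have e1 : {Y : Matrix (Fin m) (Fin m) K // LinearMap.range Y.mulVecLin = W} ≃
      {g : (Fin m → K) →ₗ[K] (Fin m → K) // LinearMap.range g = W} :=
    Equiv.subtypeEquiv (Matrix.toLin' (R := K) (m := Fin m) (n := Fin m)).toEquiv
      (fun Y => by rw [show (Matrix.toLin'.toEquiv Y : (Fin m → K) →ₗ[K] (Fin m → K))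
        = Y.mulVecLin from Matrix.toLin'_apply' Y])
  have e2 : {g : (Fin m → K) →ₗ[K] (Fin m → K) // LinearMap.range g = W} ≃
      {h : (Fin m → K) →ₗ[K] W // Surjective h} :=
    { toFun := fun g => ⟨LinearMap.codRestrict W g.1
        (fun x => by
          have hx := LinearMap.mem_range_self g.1 x
          rwa [g.2] at hx), by
          rintro ⟨y, hy⟩
          rw [← g.2] at hy
          obtain ⟨x, hx⟩ := hy
          exact ⟨x, Subtype.ext hx⟩⟩
      invFun := fun h => ⟨W.subtype ∘ₗ h.1, by
        rw [LinearMap.range_comp, LinearMap.range_eq_top.mpr h.2, Submodule.map_top,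
          Submodule.range_subtype]⟩
      left_inv := fun g => by ext x; rfl
      right_inv := fun h => by ext x; rfl }
  rw [Nat.card_congr (e1.trans e2), aux_card_surj W hW]

section Span
variable {V : Type*} [AddCommGroup V] [Module K V] {U : Submodule K V} {c t : ℕ}
  {u : Fin c → V} {w : Fin t → V}

lemma aux_sum_elim_li (hu : LinearIndependent K u) (huU : ∀ l, u l ∈ U)
    (hw : LinearIndependent K (⇑U.mkQ ∘ w)) : LinearIndependent K (Sum.elim u w) := by
  rw [Fintype.linearIndependent_iff]
  intro g hg
  rw [Fintype.sum_sum_type] at hg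
  simp only [Sum.elim_inl, Sum.elim_inr] at hg
  have hq : ∑ l, g (.inr l) • U.mkQ (w l) = 0 := by
    have h0 := congrArg U.mkQ hg
    rw [map_add, map_sum, map_sum, map_zero] at h0
    simp only [_root_.map_smul] at h0
    have hz : ∑ l, g (.inl l) • U.mkQ (u l) = 0 := by
      refine Finset.sum_eq_zero fun l _ => ?_
      rw [show U.mkQ (u l) = 0 from (Submodule.Quotient.mk_eq_zero U).mpr (huU l), smul_zero]
    rwa [hz, zero_add] at h0
  have hr : ∀ l, g (.inr l) = 0 :=
    Fintype.linearIndependent_iff.mp hw _ hq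
  have hl : ∀ l, g (.inl l) = 0 := by
    apply Fintype.linearIndependent_iff.mp hu
    have : ∑ l, g (.inr l) • w l = 0 := by
      refine Finset.sum_eq_zero fun l _ => ?_
      rw [hr l, zero_smul]
    rwa [this, add_zero] at hg
  rintro (l | l)
  · exact hl l
  · exact hr l

lemma aux_span_inf (hu : LinearIndependent K u) (huU : ∀ l, u l ∈ U)
    (hw : LinearIndependent K (⇑U.mkQ ∘ w)) :
    U ⊓ Submodule.span K (Set.range (Sum.elim u w)) = Submodule.span K (Set.range u) := by
  apply le_antisymm
  · rintro x ⟨hxU, hxW⟩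
    obtain ⟨g, hg⟩ := mem_span_range_iff_exists_fun K |>.mp hxW
    rw [Fintype.sum_sum_type] at hg
    simp only [Sum.elim_inl, Sum.elim_inr] at hg
    have hq : ∑ l, g (.inr l) • U.mkQ (w l) = 0 := by
      have h0 := congrArg U.mkQ hg
      rw [map_add, map_sum, map_sum] at h0
      simp only [_root_.map_smul] at h0
      have hz : ∑ l, g (.inl l) • U.mkQ (u l) = 0 := by
        refine Finset.sum_eq_zero fun l _ => ?_
        rw [show U.mkQ (u l) = 0 from (Submodule.Quotient.mk_eq_zero U).mpr (huU l), smul_zero]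
      have hx0 : U.mkQ x = 0 := (Submodule.Quotient.mk_eq_zero U).mpr hxU
      rw [hz, zero_add, hx0] at h0
      exact h0
    have hr : ∀ l, g (.inr l) = 0 := Fintype.linearIndependent_iff.mp hw _ hq
    have hx : x = ∑ l, g (.inl l) • u l := by
      have : ∑ l, g (.inr l) • w l = 0 := by
        refine Finset.sum_eq_zero fun l _ => ?_
        rw [hr l, zero_smul]
      rw [← hg, this, add_zero]
    rw [hx]
    exact (mem_span_range_iff_exists_fun K).mpr ⟨fun l => g (.inl l), rfl⟩
  · apply le_inf
    · rw [Submodule.span_le]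
      rintro x ⟨l, rfl⟩
      exact huU l
    · apply Submodule.span_mono
      rintro x ⟨l, rfl⟩
      exact ⟨Sum.inl l, rfl⟩

end Span

lemma aux_card_fiberW {n c t : ℕ} (U W : Submodule K (Fin n → K))
    (hWj : Module.finrank K W = c + t) (hWc : Module.finrank K ↥(U ⊓ W) = c) :
    Nat.card {a : (Fin c → (Fin n → K)) × (Fin t → (Fin n → K)) //
        ((∀ l, a.1 l ∈ U) ∧ LinearIndependent K a.1 ∧ LinearIndependent K (⇑U.mkQ ∘ a.2)) ∧
          Submodule.span K (Set.range (Sum.elim a.1 a.2)) = W} =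
      (∏ l ∈ Finset.range c, (Fintype.card K ^ c - Fintype.card K ^ l)) *
        (Fintype.card K ^ (c * t) *
          ∏ l ∈ Finset.range t, (Fintype.card K ^ t - Fintype.card K ^ l)) := by
  classical
  have e_iff : ∀ a : (Fin c → (Fin n → K)) × (Fin t → (Fin n → K)),
      (((∀ l, a.1 l ∈ U) ∧ LinearIndependent K a.1 ∧ LinearIndependent K (⇑U.mkQ ∘ a.2)) ∧
          Submodule.span K (Set.range (Sum.elim a.1 a.2)) = W) ↔
        (((∀ l, a.1 l ∈ U ⊓ W) ∧ LinearIndependent K a.1) ∧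
          ((∀ l, a.2 l ∈ W) ∧ LinearIndependent K (⇑U.mkQ ∘ a.2))) := by
    rintro ⟨u, w⟩
    constructor
    · rintro ⟨⟨h1, h2, h3⟩, hspan⟩
      refine ⟨⟨fun l => ⟨h1 l, ?_⟩, h2⟩, fun l => ?_, h3⟩
      · rw [← hspan]
        exact Submodule.subset_span ⟨Sum.inl l, rfl⟩
      · rw [← hspan]
        exact Submodule.subset_span ⟨Sum.inr l, rfl⟩
    · rintro ⟨⟨h1, h2⟩, h3, h4⟩
      refine ⟨⟨fun l => (h1 l).1, h2, h4⟩, ?_⟩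
      have hli := aux_sum_elim_li h2 (fun l => (h1 l).1) h4
      apply Submodule.eq_of_le_of_finrank_eq
      · rw [Submodule.span_le]
        rintro x ⟨(l | l), rfl⟩
        · exact (h1 l).2
        · exact h3 l
      · rw [finrank_span_eq_card hli, hWj]
        simp
  rw [Nat.card_congr ((Equiv.subtypeEquivRight e_iff).trans
    (Equiv.subtypeProdEquivProd
      (p := fun u : Fin c → (Fin n → K) => (∀ l, u l ∈ U ⊓ W) ∧ LinearIndependent K u)
      (q := fun w : Fin t → (Fin n → K) =>
        (∀ l, w l ∈ W) ∧ LinearIndependent K (⇑U.mkQ ∘ w)))), Nat.card_prod, aux_card_li_sub (U ⊓ W) c, hWc]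
  congr 1
  -- second factor
  rw [Nat.card_congr (auxRestrictTupleEquiv W t _)]
  set πW : ↥W →ₗ[K] (Fin n → K) ⧸ U := U.mkQ ∘ₗ W.subtype with hπW
  have hker : Module.finrank K (LinearMap.ker πW) = c := by
    have h1 : LinearMap.ker πW = Submodule.comap W.subtype (U ⊓ W) := by
      rw [hπW, LinearMap.ker_comp, Submodule.ker_mkQ]
      ext x
      simpa using fun _ => x.2
    rw [h1, (Submodule.comapSubtypeEquivOfLe inf_le_right).finrank_eq, hWc]
  have hrange : Module.finrank K (LinearMap.range πW) = t := by
    have h2 := LinearMap.finrank_range_add_finrank_ker πW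
    rw [hker, hWj] at h2
    omega
  have hcomp : Nat.card {s : Fin t → ↥W //
        LinearIndependent K (⇑U.mkQ ∘ fun l => ((s l : Fin n → K)))} =
      Nat.card (LinearMap.ker πW.rangeRestrict) ^ t *
        Nat.card {z : Fin t → ↥(LinearMap.range πW) //
          LinearIndependent K (⇑(LinearMap.range πW).subtype ∘ z)} :=
    aux_card_tuple_comp πW.rangeRestrict (LinearMap.surjective_rangeRestrict πW) t
      (fun z => LinearIndependent K (⇑(LinearMap.range πW).subtype ∘ z))
  have hkcard : Nat.card (LinearMap.ker πW.rangeRestrict) = Fintype.card K ^ c := by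
    rw [LinearMap.ker_rangeRestrict]
    have := Fintype.ofFinite (LinearMap.ker πW)
    rw [Nat.card_eq_fintype_card, card_eq_pow_finrank (K := K), hker]
  have hz : Nat.card {z : Fin t → ↥(LinearMap.range πW) //
      LinearIndependent K (⇑(LinearMap.range πW).subtype ∘ z)} =
      ∏ l ∈ Finset.range t, (Fintype.card K ^ t - Fintype.card K ^ l) := by
    rw [Nat.card_congr (Equiv.subtypeEquivRight
      (fun z : Fin t → ↥(LinearMap.range πW) =>
        (LinearMap.range πW).subtype.linearIndependent_iff (ker_subtype _) (v := z))),
      aux_card_li, hrange]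
  rw [hcomp, hkcard, hz, ← pow_mul]

lemma aux_card_good_mul {n i c t : ℕ} (U : Submodule K (Fin n → K))
    (hU : Module.finrank K ↥U = i) :
    Nat.card {W : Submodule K (Fin n → K) //
        Module.finrank K ↥W = c + t ∧ Module.finrank K ↥(U ⊓ W) = c} *
      ((∏ l ∈ Finset.range c, (Fintype.card K ^ c - Fintype.card K ^ l)) *
        (Fintype.card K ^ (c * t) *
          ∏ l ∈ Finset.range t, (Fintype.card K ^ t - Fintype.card K ^ l)))
    = (∏ l ∈ Finset.range c, (Fintype.card K ^ i - Fintype.card K ^ l)) *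
        (Fintype.card K ^ (i * t) *
          ∏ l ∈ Finset.range t, (Fintype.card K ^ (n - i) - Fintype.card K ^ l)) := by
  classical
  let pP : ((Fin c → (Fin n → K)) × (Fin t → (Fin n → K))) → Prop := fun a =>
    (∀ l, a.1 l ∈ U) ∧ LinearIndependent K a.1 ∧ LinearIndependent K (⇑U.mkQ ∘ a.2)
  let good : Submodule K (Fin n → K) → Prop := fun W =>
    Module.finrank K ↥W = c + t ∧ Module.finrank K ↥(U ⊓ W) = c
  let F : Subtype pP → Submodule K (Fin n → K) := fun a =>
    Submodule.span K (Set.range (Sum.elim a.1.1 a.1.2))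
  have hgood : ∀ a : Subtype pP, good (F a) := by
    rintro ⟨⟨u, w⟩, h1, h2, h3⟩
    constructor
    · rw [show F ⟨(u, w), h1, h2, h3⟩ = Submodule.span K (Set.range (Sum.elim u w)) from rfl,
        finrank_span_eq_card (aux_sum_elim_li h2 h1 h3)]
      simp
    · rw [show F ⟨(u, w), h1, h2, h3⟩ = Submodule.span K (Set.range (Sum.elim u w)) from rfl,
        aux_span_inf h2 h1 h3, finrank_span_eq_card h2]
      simp
  have step1 : Nat.card (Subtype pP) = Nat.card {a : Subtype pP // good (F a)} :=
    (Nat.card_congr (Equiv.subtypeUnivEquiv hgood)).symm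
  have step2 : Nat.card {a : Subtype pP // good (F a)} =
      ((∏ l ∈ Finset.range c, (Fintype.card K ^ c - Fintype.card K ^ l)) *
        (Fintype.card K ^ (c * t) *
          ∏ l ∈ Finset.range t, (Fintype.card K ^ t - Fintype.card K ^ l))) *
      Nat.card {W : Submodule K (Fin n → K) // good W} := by
    refine aux_card_fiber_const F good _ (fun W hW => ?_)
    rw [Nat.card_congr (Equiv.subtypeSubtypeEquivSubtypeInter pP
      (fun x => Submodule.span K (Set.range (Sum.elim x.1 x.2)) = W))]
    exact aux_card_fiberW U W hW.1 hW.2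
  have step3 : Nat.card (Subtype pP) =
      (∏ l ∈ Finset.range c, (Fintype.card K ^ i - Fintype.card K ^ l)) *
        (Fintype.card K ^ (i * t) *
          ∏ l ∈ Finset.range t, (Fintype.card K ^ (n - i) - Fintype.card K ^ l)) := by
    have e : Subtype pP ≃
        {u : Fin c → (Fin n → K) // (∀ l, u l ∈ U) ∧ LinearIndependent K u} ×
          {w : Fin t → (Fin n → K) // LinearIndependent K (⇑U.mkQ ∘ w)} :=
      (Equiv.subtypeEquivRight (fun a => and_assoc.symm)).trans
        (Equiv.subtypeProdEquivProd
          (p := fun u : Fin c → (Fin n → K) => (∀ l, u l ∈ U) ∧ LinearIndependent K u)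
          (q := fun w : Fin t → (Fin n → K) => LinearIndependent K (⇑U.mkQ ∘ w)))
    rw [Nat.card_congr e, Nat.card_prod, aux_card_li_sub U c, hU]
    congr 1
    have hq : Nat.card {w : Fin t → (Fin n → K) // LinearIndependent K (⇑U.mkQ ∘ w)} =
        Nat.card U ^ t * Nat.card {z : Fin t → (Fin n → K) ⧸ U // LinearIndependent K z} := by
      have h := aux_card_tuple_comp U.mkQ U.mkQ_surjective t
        (fun z : Fin t → (Fin n → K) ⧸ U => LinearIndependent K z)
      rwa [Submodule.ker_mkQ] at h
    rw [hq, aux_card_li]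
    have hUcard : Nat.card U = Fintype.card K ^ i := by
      have := Fintype.ofFinite U
      rw [Nat.card_eq_fintype_card, card_eq_pow_finrank (K := K), hU]
    have hquot : Module.finrank K ((Fin n → K) ⧸ U) = n - i := by
      have h2 := Submodule.finrank_quotient_add_finrank U
      rw [hU, Module.finrank_fintype_fun_eq_card, Fintype.card_fin] at h2
      omega
    rw [hUcard, hquot, ← pow_mul]
  rw [← step3, step1, step2]
  ring

end Aux

/-- The Gaussian (q-)binomial coefficient `(a choose b)_q`, as a rational number. -/
noncomputable def gaussBinom (q a b : ℕ) : ℚ :=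
  ∏ l ∈ Finset.range b, ((q : ℚ) ^ (a - l) - 1) / ((q : ℚ) ^ (b - l) - 1)

section Arith

lemma aux_gauss_prod {q a b : ℕ} (hq2 : 1 < q) (hab : b ≤ a) :
    gaussBinom q a b * ∏ l ∈ Finset.range b, ((q : ℚ) ^ b - (q : ℚ) ^ l) =
      ∏ l ∈ Finset.range b, ((q : ℚ) ^ a - (q : ℚ) ^ l) := by
  unfold gaussBinom
  rw [← Finset.prod_mul_distrib]
  refine Finset.prod_congr rfl fun l hl => ?_
  rw [Finset.mem_range] at hl
  have hq1 : (1 : ℚ) < (q : ℚ) := by exact_mod_cast hq2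
  have hden : (q : ℚ) ^ (b - l) - 1 ≠ 0 := by
    have : (1 : ℚ) < (q : ℚ) ^ (b - l) := one_lt_pow₀ hq1 (by omega)
    linarith
  have hb : (q : ℚ) ^ b = (q : ℚ) ^ l * (q : ℚ) ^ (b - l) := by
    rw [← pow_add]; congr 1; omega
  have ha : (q : ℚ) ^ a = (q : ℚ) ^ l * (q : ℚ) ^ (a - l) := by
    rw [← pow_add]; congr 1; omega
  rw [hb, ha]
  field_simp

lemma aux_gauss_zero {q a b : ℕ} (hab : a < b) : gaussBinom q a b = 0 := by
  unfold gaussBinom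
  apply Finset.prod_eq_zero (Finset.mem_range.mpr hab)
  rw [Nat.sub_self, pow_zero, sub_self, zero_div]

lemma aux_cast_prod {q m k : ℕ} (hq : 0 < q) (hkm : k ≤ m) :
    ((∏ l ∈ Finset.range k, (q ^ m - q ^ l) : ℕ) : ℚ) =
      ∏ l ∈ Finset.range k, ((q : ℚ) ^ m - (q : ℚ) ^ l) := by
  rw [Nat.cast_prod]
  refine Finset.prod_congr rfl fun l hl => ?_
  rw [Finset.mem_range] at hl
  rw [Nat.cast_sub (Nat.pow_le_pow_right hq (by omega))]
  push_cast
  ring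

lemma aux_prod_pos {q k m : ℕ} (hq2 : 1 < q) (hkm : k ≤ m) :
    0 < ∏ l ∈ Finset.range k, (q ^ m - q ^ l) := by
  apply Finset.prod_pos
  intro l hl
  rw [Finset.mem_range] at hl
  exact Nat.sub_pos_of_lt (Nat.pow_lt_pow_right hq2 (by omega))

end Arith

/-- Fix an `n × n` matrix `X` over `F_q` of rank `i`, and let `c ≤ j ≤ n`. The number
of `n × n` matrices `Y` with `rank Y = j` and `dim (col X ⊓ col Y) = c` equals
`q^{(i-c)(j-c)} (i choose c)_q (n-i choose j-c)_q ∏_{l=0}^{j-1} (q^n - q^l)`. -/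
theorem card_matrices_with_col_intersection {K : Type*} [Field K] [Fintype K]
    {q n i j c : ℕ} (hq : Fintype.card K = q) (hc : c ≤ j) (hj : j ≤ n)
    (X : Matrix (Fin n) (Fin n) K) (hX : X.rank = i) :
    (Nat.card {Y : Matrix (Fin n) (Fin n) K // Y.rank = j ∧
        Module.finrank K
          ↥(LinearMap.range X.mulVecLin ⊓ LinearMap.range Y.mulVecLin) = c} : ℚ) =
      (q : ℚ) ^ ((i - c) * (j - c)) * gaussBinom q i c * gaussBinom q (n - i) (j - c) *
        ∏ l ∈ Finset.range j, ((q : ℚ) ^ n - q ^ l) := by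
  classical
  subst hq
  have hq2 : 1 < Fintype.card K := Fintype.one_lt_card
  set U := LinearMap.range X.mulVecLin with hUdef
  have hU : Module.finrank K U = i := hX
  have hin : i ≤ n := by
    have h1 := Submodule.finrank_le U
    rwa [hU, Module.finrank_fintype_fun_eq_card, Fintype.card_fin] at h1
  obtain ⟨t, rfl⟩ : ∃ t, j = c + t := ⟨j - c, (Nat.add_sub_cancel' hc).symm⟩
  simp only [Nat.add_sub_cancel_left]
  -- fibration over column spaces
  have hA : Nat.card {Y : Matrix (Fin n) (Fin n) K // Y.rank = c + t ∧
      Module.finrank K ↥(U ⊓ LinearMap.range Y.mulVecLin) = c} =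
      (∏ l ∈ Finset.range (c + t), (Fintype.card K ^ n - Fintype.card K ^ l)) *
        Nat.card {W : Submodule K (Fin n → K) //
          Module.finrank K ↥W = c + t ∧ Module.finrank K ↥(U ⊓ W) = c} := by
    exact aux_card_fiber_const (fun Y : Matrix (Fin n) (Fin n) K => LinearMap.range Y.mulVecLin)
      (fun W => Module.finrank K ↥W = c + t ∧ Module.finrank K ↥(U ⊓ W) = c) _
      (fun W hW => aux_card_colspace W hW.1)
  have hmul := aux_card_good_mul (c := c) (t := t) U hU
  set G := Nat.card {W : Submodule K (Fin n → K) //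
      Module.finrank K ↥W = c + t ∧ Module.finrank K ↥(U ⊓ W) = c} with hGdef
  rw [hA]
  push_cast [aux_cast_prod hq2.le (by omega : c + t ≤ n)]
  -- main claim about G
  have hG : (G : ℚ) = (Fintype.card K : ℚ) ^ ((i - c) * t) *
      gaussBinom (Fintype.card K) i c * gaussBinom (Fintype.card K) (n - i) t := by
    by_cases hmain : c ≤ i ∧ t ≤ n - i
    · obtain ⟨hci, htn⟩ := hmain
      have hcast := congrArg (fun x : ℕ => (x : ℚ)) hmul
      simp only [Nat.cast_mul, Nat.cast_pow, aux_cast_prod hq2.le (le_refl c),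
        aux_cast_prod hq2.le (le_refl t), aux_cast_prod hq2.le hci,
        aux_cast_prod hq2.le htn] at hcast
      have hq1 : (1 : ℚ) < (Fintype.card K : ℚ) := by exact_mod_cast hq2
      have hD : ((∏ l ∈ Finset.range c,
          ((Fintype.card K : ℚ) ^ c - (Fintype.card K : ℚ) ^ l)) *
          ((Fintype.card K : ℚ) ^ (c * t) *
            ∏ l ∈ Finset.range t,
              ((Fintype.card K : ℚ) ^ t - (Fintype.card K : ℚ) ^ l))) ≠ 0 := by
        have h1 : (0 : ℚ) < ∏ l ∈ Finset.range c,
            ((Fintype.card K : ℚ) ^ c - (Fintype.card K : ℚ) ^ l) := by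
          apply Finset.prod_pos
          intro l hl
          rw [Finset.mem_range] at hl
          have := pow_lt_pow_right₀ hq1 hl
          linarith
        have h2 : (0 : ℚ) < ∏ l ∈ Finset.range t,
            ((Fintype.card K : ℚ) ^ t - (Fintype.card K : ℚ) ^ l) := by
          apply Finset.prod_pos
          intro l hl
          rw [Finset.mem_range] at hl
          have := pow_lt_pow_right₀ hq1 hl
          linarith
        positivity
      apply mul_right_cancel₀ hD
      rw [hcast]
      have e1 := aux_gauss_prod (q := Fintype.card K) hq2 hci
      have e2 := aux_gauss_prod (q := Fintype.card K) hq2 htn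
      have e3 : (Fintype.card K : ℚ) ^ (i * t) =
          (Fintype.card K : ℚ) ^ ((i - c) * t) * (Fintype.card K : ℚ) ^ (c * t) := by
        rw [← pow_add]
        congr 1
        rw [← Nat.add_mul, Nat.sub_add_cancel hci]
      rw [← e1, ← e2, e3]
      ring
    · -- degenerate case : both sides vanish
      have hzero : (∏ l ∈ Finset.range c, (Fintype.card K ^ i - Fintype.card K ^ l)) *
          (Fintype.card K ^ (i * t) *
            ∏ l ∈ Finset.range t, (Fintype.card K ^ (n - i) - Fintype.card K ^ l)) = 0 := by
        rcases not_and_or.mp hmain with h | h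
        · have : (∏ l ∈ Finset.range c, (Fintype.card K ^ i - Fintype.card K ^ l)) = 0 :=
            Finset.prod_eq_zero (Finset.mem_range.mpr (by omega)) (Nat.sub_self _)
          rw [this, zero_mul]
        · have : (∏ l ∈ Finset.range t, (Fintype.card K ^ (n - i) - Fintype.card K ^ l)) = 0 :=
            Finset.prod_eq_zero (Finset.mem_range.mpr (by omega)) (Nat.sub_self _)
          rw [this, mul_zero, mul_zero]
      rw [hzero] at hmul
      have hpos : 0 < (∏ l ∈ Finset.range c, (Fintype.card K ^ c - Fintype.card K ^ l)) *
          (Fintype.card K ^ (c * t) *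
            ∏ l ∈ Finset.range t, (Fintype.card K ^ t - Fintype.card K ^ l)) := by
        have h1 := aux_prod_pos (k := c) (m := c) hq2 le_rfl
        have h2 := aux_prod_pos (k := t) (m := t) hq2 le_rfl
        positivity
      have hG0 : G = 0 := by
        rcases Nat.mul_eq_zero.mp hmul with h | h
        · exact h
        · omega
      rw [hG0]
      rcases not_and_or.mp hmain with h | h
      · rw [aux_gauss_zero (by omega : i < c)]
        push_cast
        ring
      · rw [aux_gauss_zero (by omega : n - i < t)]
        push_cast
        ring
  rw [hG]
  ring
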